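/- For every orientation L ∈ O_f, the composite map ψ := ψ_{e_1} ∘ ⋯ ∘ ψ_{e_m} satisfies: ψ(L) is a subgraph of G admitting a d-flow (so ψ maps O_f into S_f) and A(ψ(L)) = A(L). -/

import Mathlib

open Finset

section Defs

variable {V : Type*}

/-- Reversal of a directed edge. -/
def drev (e : V × V) : V × V := (e.2, e.1)

/-- `K` is a subgraph of the (symmetric) edge set `E`: it contains either both or
neither of `e` and `drev e` for every `e ∈ E`. -/
def IsSubgraph [DecidableEq V] (E K : Finset (V × V)) : Prop :=
  K ⊆ E ∧ ∀ e ∈ E, (e ∈ K ↔ drev e ∈ K)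

/-- `L` is an orientation of the (symmetric) edge set `E`: it contains exactly one of
`e` and `drev e` for every `e ∈ E`. -/
def IsOrientation [DecidableEq V] (E L : Finset (V × V)) : Prop :=
  L ⊆ E ∧ ∀ e ∈ E, (e ∈ L ↔ drev e ∉ L)

variable [Fintype V] [DecidableEq V]

/-- `f` is a `d`-flow on the directed subgraph `D` of the graph with edge set `E`. -/
def IsFlow (E D : Finset (V × V)) (d : V → ℤ) (f : V × V → ℝ) : Prop :=
  (∀ e ∈ E, 0 ≤ f e ∧ f e ≤ 1) ∧
  (∀ e, e ∉ D → f e = 0) ∧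
  ∀ u : V,
    ((Finset.univ.filter (fun v : V => (u, v) ∈ E)).sum fun v => f (u, v)) -
      ((Finset.univ.filter (fun v : V => (v, u) ∈ E)).sum fun v => f (v, u)) = (d u : ℝ)

/-- A `d`-flow exists on `D`. -/
def AdmitsFlow (E D : Finset (V × V)) (d : V → ℤ) : Prop :=
  ∃ f : V × V → ℝ, IsFlow E D d f

/-- The `w`-cost of a flow `f`. -/
def flowCost (E : Finset (V × V)) (w : V × V → ℝ) (f : V × V → ℝ) : ℝ :=
  ∑ e ∈ E, w e * f e

/-- `f` is a min-cost `d`-flow on `D`. -/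
def IsMinCostFlow (E D : Finset (V × V)) (d : V → ℤ) (w : V × V → ℝ)
    (f : V × V → ℝ) : Prop :=
  IsFlow E D d f ∧ ∀ g : V × V → ℝ, IsFlow E D d g → flowCost E w f ≤ flowCost E w g

/-- The `{0,1}`-valued function determined by a set of edges. -/
def ind (S : Finset (V × V)) : V × V → ℝ := fun e => if e ∈ S then 1 else 0

/-- `A` assigns to every flow-admitting `D ⊆ E` the (edge set of the) unique,
`{0,1}`-valued min-cost `d`-flow on `D`. -/
def GoodA (E : Finset (V × V)) (d : V → ℤ) (w : V × V → ℝ)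
    (A : Finset (V × V) → Finset (V × V)) : Prop :=
  ∀ D : Finset (V × V), D ⊆ E → AdmitsFlow E D d →
    IsMinCostFlow E D d w (ind (A D)) ∧
    ∀ f : V × V → ℝ, IsMinCostFlow E D d w f → f = ind (A D)

/-- `A(D) = A(D')`: both `D` and `D'` admit a `d`-flow and their unique min-cost
`d`-flows coincide.  (If one of them admits no `d`-flow this is false.) -/
def AEq (E : Finset (V × V)) (d : V → ℤ) (A : Finset (V × V) → Finset (V × V))
    (D D' : Finset (V × V)) : Prop :=
  AdmitsFlow E D d ∧ AdmitsFlow E D' d ∧ A D = A D'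

/-- `D ⊕ e := (D ∪ {e}) \ {drev e}`. -/
def oplus (D : Finset (V × V)) (e : V × V) : Finset (V × V) := insert e D \ {drev e}

/-- `D + e := D ∪ {e, drev e}`. -/
def padd (D : Finset (V × V)) (e : V × V) : Finset (V × V) := D ∪ {e, drev e}

/-- `D − e := D \ {e, drev e}`. -/
def psub (D : Finset (V × V)) (e : V × V) : Finset (V × V) := D \ {e, drev e}

/-- The representative of `{e, drev e}` lying in the reference orientation `E'`. -/
def chi (E' : Finset (V × V)) (e : V × V) : V × V := if e ∈ E' then e else drev e

/-- The map `φ_e`. -/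
noncomputable def phiE (E : Finset (V × V)) (d : V → ℤ)
    (A : Finset (V × V) → Finset (V × V)) (E' : Finset (V × V))
    (e : V × V) (D : Finset (V × V)) : Finset (V × V) := by
  classical
  exact
    if ¬ AEq E d A D (oplus D e) then oplus D (drev e)
    else if ¬ AEq E d A D (oplus D (drev e)) then oplus D e
    else if e ∈ D then oplus D (chi E' e) else oplus D (drev (chi E' e))

/-- The map `ψ_e`. -/
noncomputable def psiE (E : Finset (V × V)) (d : V → ℤ)
    (A : Finset (V × V) → Finset (V × V)) (E' : Finset (V × V))
    (e : V × V) (D : Finset (V × V)) : Finset (V × V) := by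
  classical
  exact
    if ¬ AEq E d A D (padd D e) then psub D e
    else if ¬ AEq E d A D (psub D e) then padd D e
    else if chi E' e ∈ D then padd D e else psub D e

end Defs
section Helpers

set_option linter.unusedSectionVars false

variable {V : Type*} [Fintype V] [DecidableEq V]

lemma drev_drev (e : V × V) : drev (drev e) = e := rfl

lemma ind_inj {S S' : Finset (V × V)} (h : ind S = ind S') : S = S' := by
  ext x
  have hx := congrFun h x
  simp only [ind] at hx
  split_ifs at hx with h1 h2 <;> simp_all

lemma ind_mem_one {S : Finset (V × V)} {x : V × V} (hx : x ∈ S) : ind S x = 1 := by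
  simp [ind, hx]

lemma ind_not_mem_zero {S : Finset (V × V)} {x : V × V} (hx : x ∉ S) : ind S x = 0 := by
  simp [ind, hx]

lemma ind_dichotomy (S : Finset (V × V)) (x : V × V) : ind S x = 0 ∨ ind S x = 1 := by
  by_cases hx : x ∈ S <;> simp [ind, hx]

lemma mem_padd {D : Finset (V × V)} {e x : V × V} :
    x ∈ padd D e ↔ x ∈ D ∨ x = e ∨ x = drev e := by
  simp [padd, Finset.mem_union, Finset.mem_insert, Finset.mem_singleton]; tauto

lemma mem_psub {D : Finset (V × V)} {e x : V × V} :
    x ∈ psub D e ↔ x ∈ D ∧ x ≠ e ∧ x ≠ drev e := by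
  simp [psub, Finset.mem_sdiff, Finset.mem_insert, Finset.mem_singleton, not_or, and_assoc]

lemma padd_comm_rev (D : Finset (V × V)) (e : V × V) : padd D (drev e) = padd D e := by
  ext x; simp [mem_padd, drev_drev]; tauto

lemma isFlow_mono {E D D' : Finset (V × V)} {d : V → ℤ} {f : V × V → ℝ}
    (hf : IsFlow E D d f) (hDD : D ⊆ D') : IsFlow E D' d f :=
  ⟨hf.1, fun e he => hf.2.1 e (fun h => he (hDD h)), hf.2.2⟩

/-- divergence of `g` at `u`. -/
def dive (E : Finset (V × V)) (g : V × V → ℝ) (u : V) : ℝ :=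
  ((Finset.univ.filter (fun v : V => (u, v) ∈ E)).sum fun v => g (u, v)) -
    ((Finset.univ.filter (fun v : V => (v, u) ∈ E)).sum fun v => g (v, u))

lemma isFlow_dive {E D : Finset (V × V)} {d : V → ℤ} {f : V × V → ℝ}
    (hf : IsFlow E D d f) (u : V) : dive E f u = (d u : ℝ) := hf.2.2 u

lemma isFlow_of_dive {E D : Finset (V × V)} {d : V → ℤ} {f : V × V → ℝ}
    (hb : ∀ e ∈ E, 0 ≤ f e ∧ f e ≤ 1) (hv : ∀ e, e ∉ D → f e = 0)
    (hd : ∀ u, dive E f u = (d u : ℝ)) : IsFlow E D d f := ⟨hb, hv, hd⟩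

lemma dive_avg (E : Finset (V × V)) (p q : V × V → ℝ) (u : V) :
    dive E (fun x => (p x + q x) / 2) u = (dive E p u + dive E q u) / 2 := by
  simp only [dive, add_div, Finset.sum_add_distrib, ← Finset.sum_div]
  ring

lemma dive_sub (E : Finset (V × V)) (p q : V × V → ℝ) (u : V) :
    dive E (fun x => p x - q x) u = dive E p u - dive E q u := by
  simp only [dive, Finset.sum_sub_distrib]
  ring

lemma sum_ite_single (s : ℝ) (b : V × V) (u : V) (F : Finset V) (hb : u = b.1 → b.2 ∈ F) :
    (∑ v ∈ F, if (u, v) = b then s else 0) = if u = b.1 then s else 0 := by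
  simp only [Prod.ext_iff]
  by_cases hu : u = b.1
  · simp only [hu, true_and, if_true]
    rw [Finset.sum_ite_eq' F b.2 (fun _ => s), if_pos (hb hu)]
  · simp [hu]

lemma sum_ite_pair (s : ℝ) (a : V × V) (ha : a.1 ≠ a.2) (u : V) (P : V → Prop)
    [DecidablePred P] (hPa : u = a.1 → P a.2) (hPr : u = a.2 → P a.1) :
    (∑ v ∈ Finset.univ.filter P, (if (u, v) = a ∨ (u, v) = drev a then s else 0)) =
      (if u = a.1 then s else 0) + (if u = a.2 then s else 0) := by
  have key : ∀ v, (if (u, v) = a ∨ (u, v) = drev a then s else 0) =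
      (if (u, v) = a then s else 0) + (if (u, v) = drev a then s else 0) := by
    intro v
    rcases eq_or_ne (u, v) a with h1 | h1
    · have h2 : (u, v) ≠ drev a := fun h2 => ha (congrArg Prod.fst (h1.symm.trans h2))
      rw [if_pos (Or.inl h1), if_pos h1, if_neg h2]; ring
    · rcases eq_or_ne (u, v) (drev a) with h2 | h2
      · rw [if_pos (Or.inr h2), if_neg h1, if_pos h2]; ring
      · rw [if_neg (by tauto), if_neg h1, if_neg h2]; ring
  rw [Finset.sum_congr rfl (fun v _ => key v), Finset.sum_add_distrib]
  congr 1
  · exact sum_ite_single s a u _ (fun hu => Finset.mem_filter.2 ⟨Finset.mem_univ _, hPa hu⟩)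
  · have := sum_ite_single s (drev a) u (Finset.univ.filter P)
      (fun hu => Finset.mem_filter.2 ⟨Finset.mem_univ _, hPr hu⟩)
    exact this

lemma dive_pair (E : Finset (V × V)) (a : V × V) (haE : a ∈ E) (hrE : drev a ∈ E)
    (ha : a.1 ≠ a.2) (s : ℝ) (u : V) :
    dive E (fun x => if x = a ∨ x = drev a then s else 0) u = 0 := by
  unfold dive
  have h1 : (∑ v ∈ Finset.univ.filter (fun v : V => (u, v) ∈ E),
      (if (u, v) = a ∨ (u, v) = drev a then s else 0)) =
      (if u = a.1 then s else 0) + (if u = a.2 then s else 0) := by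
    apply sum_ite_pair s a ha u
    · rintro rfl; exact (show ((a.1 : V), a.2) ∈ E from haE)
    · rintro rfl; exact (show ((a.2 : V), a.1) ∈ E from hrE)
  have h2 : (∑ v ∈ Finset.univ.filter (fun v : V => (v, u) ∈ E),
      (if (v, u) = a ∨ (v, u) = drev a then s else 0)) =
      (if u = a.2 then s else 0) + (if u = a.1 then s else 0) := by
    have hswap : ∀ v : V, ((v, u) = a ∨ (v, u) = drev a) ↔
        ((u, v) = drev a ∨ (u, v) = drev (drev a)) := by
      intro v; simp only [drev, Prod.ext_iff]; tauto
    rw [Finset.sum_congr rfl (fun v _ => if_congr (hswap v) rfl rfl)]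
    have := sum_ite_pair s (drev a) (Ne.symm ha) u (fun v : V => (v, u) ∈ E)
      (fun hu => by rw [hu]; exact (show ((a.1 : V), a.2) ∈ E from haE))
      (fun hu => by rw [hu]; exact (show ((a.2 : V), a.1) ∈ E from hrE))
    exact this
  rw [h1, h2]; ring

end Helpers
section Helpers2

set_option linter.unusedSectionVars false
set_option maxHeartbeats 1000000

variable {V : Type*} [Fintype V] [DecidableEq V]

lemma flowCost_avg (E : Finset (V × V)) (w p q : V × V → ℝ) :
    flowCost E w (fun x => (p x + q x) / 2) =
      (flowCost E w p + flowCost E w q) / 2 := by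
  simp only [flowCost, mul_add, mul_div, Finset.sum_add_distrib, ← Finset.sum_div]

lemma flowCost_mono (E : Finset (V × V)) (w p q : V × V → ℝ)
    (hw : ∀ e ∈ E, 0 < w e) (h : ∀ e ∈ E, p e ≤ q e) :
    flowCost E w p ≤ flowCost E w q := by
  apply Finset.sum_le_sum
  intro e he
  exact mul_le_mul_of_nonneg_left (h e he) (hw e he).le

/-- The key lemma: if adding the pair `{e, drev e}` changes the min-cost flow, then
the min-cost flow on `D` vanishes on `e`. -/
lemma vanish_one (E : Finset (V × V)) (hE_symm : ∀ e, e ∈ E ↔ drev e ∈ E)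
    (hE_ne : ∀ e ∈ E, e.1 ≠ e.2) (d : V → ℤ) (w : V × V → ℝ) (hw : ∀ e ∈ E, 0 < w e)
    (A : Finset (V × V) → Finset (V × V)) (hA : GoodA E d w A)
    (D : Finset (V × V)) (hD : D ⊆ E) (hDf : AdmitsFlow E D d)
    (e : V × V) (he : e ∈ E)
    (hne : A D ≠ A (padd D e)) : ind (A D) e = 0 := by
  have hre : drev e ∈ E := (hE_symm e).1 he
  have hPsub : padd D e ⊆ E := by
    intro x hx
    rcases mem_padd.1 hx with h | h | h
    · exact hD h
    · exact h ▸ he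
    · exact h ▸ hre
  have hPf : AdmitsFlow E (padd D e) d := by
    obtain ⟨g0, hg0⟩ := hDf
    exact ⟨g0, isFlow_mono hg0 (Finset.subset_union_left)⟩
  obtain ⟨hminD, huniqD⟩ := hA D hD hDf
  obtain ⟨hminP, huniqP⟩ := hA (padd D e) hPsub hPf
  set f : V × V → ℝ := ind (A D) with hf_def
  set f' : V × V → ℝ := ind (A (padd D e)) with hf'_def
  -- the min cost on padd is strictly smaller
  have hfP : IsFlow E (padd D e) d f := isFlow_mono hminD.1 (Finset.subset_union_left)
  have hclt : flowCost E w f' < flowCost E w f := by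
    by_contra hcon
    push_neg at hcon
    have hfmin : IsMinCostFlow E (padd D e) d w f :=
      ⟨hfP, fun g hg => le_trans hcon (hminP.2 g hg)⟩
    exact hne (ind_inj (huniqP f hfmin))
  -- suppose f e ≠ 0
  by_contra hfe0
  have hfe1 : f e = 1 := by
    rcases ind_dichotomy (A D) e with h | h
    · exact absurd h hfe0
    · exact h
  have heD : e ∈ D := by
    by_contra h
    exact hfe0 (hminD.1.2.1 e h)
  have hreD : drev e ∉ D := by
    intro h
    apply hne
    congr 1
    apply Finset.Subset.antisymm (Finset.subset_union_left)
    intro x hx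
    rcases mem_padd.1 hx with h' | h' | h'
    · exact h'
    · exact h' ▸ heD
    · exact h' ▸ h
  have hfre : f (drev e) = 0 := hminD.1.2.1 _ hreD
  have hene : e ≠ drev e := fun h => hE_ne e he (congrArg Prod.fst h)
  have hf'e : 0 ≤ f' e ∧ f' e ≤ 1 := hminP.1.1 e he
  -- case on f' (drev e)
  have hdi : f' (drev e) = 0 ∨ f' (drev e) = 1 := ind_dichotomy (A (padd D e)) (drev e)
  rcases hdi with hfr0 | hfr1
  · -- f' vanishes on drev e : the average is a cheaper flow on D
    have hhflow : IsFlow E D d (fun x => (f x + f' x) / 2) := by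
      refine isFlow_of_dive ?_ ?_ ?_
      · intro x hx
        obtain ⟨h1, h2⟩ := hminD.1.1 x hx
        obtain ⟨h3, h4⟩ := hminP.1.1 x hx
        constructor
        · linarith
        · linarith
      · intro x hx
        have h1 : f x = 0 := hminD.1.2.1 x hx
        have h2 : f' x = 0 := by
          by_cases hxP : x ∈ padd D e
          · rcases mem_padd.1 hxP with h' | h' | h'
            · exact absurd h' hx
            · exact absurd (h' ▸ heD) hx
            · exact h' ▸ hfr0
          · exact hminP.1.2.1 x hxP
        rw [h1, h2]; norm_num
      · intro u
        rw [dive_avg, isFlow_dive hminD.1 u, isFlow_dive hminP.1 u]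
        ring
    have := hminD.2 _ hhflow
    rw [flowCost_avg] at this
    linarith
  · -- f' (drev e) = 1 : cancel the pair
    have hhflow : IsFlow E D d
        (fun x => (f x + f' x) / 2 - if x = e ∨ x = drev e then (1 / 2 : ℝ) else 0) := by
      refine isFlow_of_dive ?_ ?_ ?_
      · intro x hx
        obtain ⟨h1, h2⟩ := hminD.1.1 x hx
        obtain ⟨h3, h4⟩ := hminP.1.1 x hx
        by_cases hxe : x = e
        · rw [if_pos (Or.inl hxe), hxe, hfe1]
          constructor
          · linarith [hf'e.1]
          · linarith [hf'e.2]
        · by_cases hxr : x = drev e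
          · rw [if_pos (Or.inr hxr), hxr, hfre, hfr1]
            norm_num
          · rw [if_neg (by tauto)]
            constructor <;> linarith
      · intro x hx
        by_cases hxe : x = e
        · exact absurd (hxe ▸ heD) hx
        · by_cases hxr : x = drev e
          · rw [if_pos (Or.inr hxr), hxr, hfre, hfr1]
            norm_num
          · have h1 : f x = 0 := hminD.1.2.1 x hx
            have h2 : f' x = 0 := by
              apply hminP.1.2.1 x
              intro hxP
              rcases mem_padd.1 hxP with h' | h' | h'
              · exact hx h'
              · exact hxe h'
              · exact hxr h'
            rw [if_neg (by tauto), h1, h2]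
            norm_num
      · intro u
        rw [dive_sub E (fun x => (f x + f' x) / 2)
          (fun x => if x = e ∨ x = drev e then (1 / 2 : ℝ) else 0) u, dive_avg,
          isFlow_dive hminD.1 u, isFlow_dive hminP.1 u,
          dive_pair E e he hre (hE_ne e he)]
        ring
    have hcost : flowCost E w
        (fun x => (f x + f' x) / 2 - if x = e ∨ x = drev e then (1 / 2 : ℝ) else 0) ≤
        (flowCost E w f + flowCost E w f') / 2 := by
      have hm := flowCost_mono E w
        (fun x => (f x + f' x) / 2 - if x = e ∨ x = drev e then (1 / 2 : ℝ) else 0)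
        (fun x => (f x + f' x) / 2) hw (by
          intro x hx
          by_cases hxc : x = e ∨ x = drev e
          · rw [if_pos hxc]; linarith
          · rw [if_neg hxc]; linarith)
      rw [flowCost_avg] at hm
      exact hm
    have := hminD.2 _ hhflow
    linarith

end Helpers2
section Helpers3

set_option linter.unusedSectionVars false
set_option maxHeartbeats 1000000

variable {V : Type*} [Fintype V] [DecidableEq V]

lemma step_psub (E : Finset (V × V)) (hE_symm : ∀ e, e ∈ E ↔ drev e ∈ E)
    (hE_ne : ∀ e ∈ E, e.1 ≠ e.2) (d : V → ℤ) (w : V × V → ℝ) (hw : ∀ e ∈ E, 0 < w e)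
    (A : Finset (V × V) → Finset (V × V)) (hA : GoodA E d w A)
    (D : Finset (V × V)) (hD : D ⊆ E) (hDf : AdmitsFlow E D d)
    (e : V × V) (he : e ∈ E)
    (hne : A D ≠ A (padd D e)) :
    AdmitsFlow E (psub D e) d ∧ A (psub D e) = A D := by
  have hre : drev e ∈ E := (hE_symm e).1 he
  have hfe : ind (A D) e = 0 := vanish_one E hE_symm hE_ne d w hw A hA D hD hDf e he hne
  have hfre : ind (A D) (drev e) = 0 := by
    apply vanish_one E hE_symm hE_ne d w hw A hA D hD hDf (drev e) hre
    rwa [padd_comm_rev]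
  obtain ⟨hminD, huniqD⟩ := hA D hD hDf
  have hsub : psub D e ⊆ D := Finset.sdiff_subset
  have hflow : IsFlow E (psub D e) d (ind (A D)) := by
    refine ⟨hminD.1.1, ?_, hminD.1.2.2⟩
    intro x hx
    by_cases hxD : x ∈ D
    · rw [mem_psub] at hx
      push_neg at hx
      rcases eq_or_ne x e with rfl | hxe
      · exact hfe
      · exact (hx hxD hxe) ▸ hfre
    · exact hminD.1.2.1 x hxD
  have hmin : IsMinCostFlow E (psub D e) d w (ind (A D)) :=
    ⟨hflow, fun g hg => hminD.2 g (isFlow_mono hg hsub)⟩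
  have hAd : AdmitsFlow E (psub D e) d := ⟨ind (A D), hflow⟩
  obtain ⟨hminS, huniqS⟩ := hA (psub D e) (hsub.trans hD) hAd
  exact ⟨hAd, (ind_inj (huniqS _ hmin)).symm⟩

lemma psiE_shape (E : Finset (V × V)) (d : V → ℤ) (A : Finset (V × V) → Finset (V × V))
    (E' : Finset (V × V)) (e : V × V) (D : Finset (V × V)) :
    psiE E d A E' e D = padd D e ∨ psiE E d A E' e D = psub D e := by
  unfold psiE
  split_ifs <;> simp

lemma psi_step (E : Finset (V × V)) (hE_symm : ∀ e, e ∈ E ↔ drev e ∈ E)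
    (hE_ne : ∀ e ∈ E, e.1 ≠ e.2) (d : V → ℤ) (w : V × V → ℝ) (hw : ∀ e ∈ E, 0 < w e)
    (A : Finset (V × V) → Finset (V × V)) (hA : GoodA E d w A) (E' : Finset (V × V))
    (e : V × V) (he : e ∈ E) (D : Finset (V × V)) (hD : D ⊆ E) (hDf : AdmitsFlow E D d) :
    psiE E d A E' e D ⊆ E ∧ AdmitsFlow E (psiE E d A E' e D) d ∧
      A (psiE E d A E' e D) = A D := by
  have hre : drev e ∈ E := (hE_symm e).1 he
  have hPsub : padd D e ⊆ E := by
    intro x hx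
    rcases mem_padd.1 hx with h | h | h
    · exact hD h
    · exact h ▸ he
    · exact h ▸ hre
  have hSsub : psub D e ⊆ E := (Finset.sdiff_subset).trans hD
  have hPf : AdmitsFlow E (padd D e) d := by
    obtain ⟨g0, hg0⟩ := hDf
    exact ⟨g0, isFlow_mono hg0 (Finset.subset_union_left)⟩
  unfold psiE
  by_cases h1 : AEq E d A D (padd D e)
  · rw [if_neg (not_not_intro h1)]
    by_cases h2 : AEq E d A D (psub D e)
    · rw [if_neg (not_not_intro h2)]
      by_cases h3 : chi E' e ∈ D
      · rw [if_pos h3]; exact ⟨hPsub, h1.2.1, h1.2.2.symm⟩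
      · rw [if_neg h3]; exact ⟨hSsub, h2.2.1, h2.2.2.symm⟩
    · rw [if_pos h2]; exact ⟨hPsub, h1.2.1, h1.2.2.symm⟩
  · rw [if_pos h1]
    have hne : A D ≠ A (padd D e) := fun h => h1 ⟨hDf, hPf, h⟩
    obtain ⟨ha, heq⟩ := step_psub E hE_symm hE_ne d w hw A hA D hD hDf e he hne
    exact ⟨hSsub, ha, heq⟩

lemma foldr_psi (E : Finset (V × V)) (hE_symm : ∀ e, e ∈ E ↔ drev e ∈ E)
    (hE_ne : ∀ e ∈ E, e.1 ≠ e.2) (d : V → ℤ) (w : V × V → ℝ) (hw : ∀ e ∈ E, 0 < w e)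
    (A : Finset (V × V) → Finset (V × V)) (hA : GoodA E d w A) (E' : Finset (V × V)) :
    ∀ (l : List (V × V)), (∀ e ∈ l, e ∈ E) → ∀ D : Finset (V × V),
      D ⊆ E → AdmitsFlow E D d →
      (l.foldr (fun e D => psiE E d A E' e D) D ⊆ E ∧
        AdmitsFlow E (l.foldr (fun e D => psiE E d A E' e D) D) d ∧
        A (l.foldr (fun e D => psiE E d A E' e D) D) = A D) ∧
      ∀ x : V × V, (∀ e ∈ l, x ≠ e ∧ x ≠ drev e) →
        (x ∈ l.foldr (fun e D => psiE E d A E' e D) D ↔ x ∈ D) := by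
  intro l
  induction l with
  | nil => exact fun _ D hD hDf => ⟨⟨hD, hDf, rfl⟩, fun x _ => Iff.rfl⟩
  | cons e t ih =>
    intro hl D hD hDf
    have htE : ∀ e' ∈ t, e' ∈ E := fun e' h => hl e' (List.mem_cons_of_mem e h)
    have heE : e ∈ E := hl e List.mem_cons_self
    obtain ⟨⟨hK1, hK2, hK3⟩, hKm⟩ := ih htE D hD hDf
    obtain ⟨hs1, hs2, hs3⟩ := psi_step E hE_symm hE_ne d w hw A hA E' e heE
      (t.foldr (fun e D => psiE E d A E' e D) D) hK1 hK2
    refine ⟨⟨hs1, hs2, hs3.trans hK3⟩, ?_⟩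
    intro x hx
    have hxe := hx e List.mem_cons_self
    have hmem : x ∈ psiE E d A E' e (t.foldr (fun e D => psiE E d A E' e D) D) ↔
        x ∈ t.foldr (fun e D => psiE E d A E' e D) D := by
      rcases psiE_shape E d A E' e (t.foldr (fun e D => psiE E d A E' e D) D)
        with h | h <;> rw [h]
      · rw [mem_padd]
        constructor
        · rintro (h' | h' | h')
          · exact h'
          · exact absurd h' hxe.1
          · exact absurd h' hxe.2
        · exact Or.inl
      · rw [mem_psub]
        exact ⟨fun h' => h'.1, fun h' => ⟨h', hxe.1, hxe.2⟩⟩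
    exact hmem.trans (hKm x (fun e' h => hx e' (List.mem_cons_of_mem e h)))

lemma mem_foldr_pair (E : Finset (V × V)) (hE_symm : ∀ e, e ∈ E ↔ drev e ∈ E)
    (hE_ne : ∀ e ∈ E, e.1 ≠ e.2) (d : V → ℤ) (w : V × V → ℝ) (hw : ∀ e ∈ E, 0 < w e)
    (A : Finset (V × V) → Finset (V × V)) (hA : GoodA E d w A)
    (E' : Finset (V × V)) (hE' : IsOrientation E E')
    (l : List (V × V)) (hnd : l.Nodup) (hlE' : ∀ e ∈ l, e ∈ E')
    (r : V × V) (hr : r ∈ l) (D : Finset (V × V)) (hD : D ⊆ E) (hDf : AdmitsFlow E D d) :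
    (r ∈ l.foldr (fun e D => psiE E d A E' e D) D ↔
      drev r ∈ l.foldr (fun e D => psiE E d A E' e D) D) := by
  obtain ⟨l₁, l₂, rfl⟩ := List.append_of_mem hr
  have hrl₁ : r ∉ l₁ := fun h =>
    (List.disjoint_of_nodup_append hnd) h List.mem_cons_self
  have hrE' : r ∈ E' := hlE' r hr
  have hrE : r ∈ E := hE'.1 hrE'
  have hl₂E : ∀ e ∈ l₂, e ∈ E := fun e h =>
    hE'.1 (hlE' e (List.mem_append_right l₁ (List.mem_cons_of_mem r h)))
  have hl₁E' : ∀ e ∈ l₁, e ∈ E' := fun e h => hlE' e (List.mem_append_left _ h)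
  rw [List.foldr_append]
  obtain ⟨⟨hJ1, hJ2, _⟩, _⟩ := foldr_psi E hE_symm hE_ne d w hw A hA E' l₂ hl₂E D hD hDf
  obtain ⟨hg1, hg2, _⟩ := psi_step E hE_symm hE_ne d w hw A hA E' r hrE
    (l₂.foldr (fun e D => psiE E d A E' e D) D) hJ1 hJ2
  have hpair : r ∈ psiE E d A E' r (l₂.foldr (fun e D => psiE E d A E' e D) D) ↔
      drev r ∈ psiE E d A E' r (l₂.foldr (fun e D => psiE E d A E' e D) D) := by
    rcases psiE_shape E d A E' r (l₂.foldr (fun e D => psiE E d A E' e D) D)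
      with h | h <;> rw [h] <;> simp [mem_padd, mem_psub]
  obtain ⟨_, hmem⟩ := foldr_psi E hE_symm hE_ne d w hw A hA E' l₁
    (fun e h => hE'.1 (hl₁E' e h))
    (psiE E d A E' r (l₂.foldr (fun e D => psiE E d A E' e D) D)) hg1 hg2
  have c1 : ∀ e ∈ l₁, r ≠ e ∧ r ≠ drev e := by
    intro e hel
    have heE' : e ∈ E' := hl₁E' e hel
    refine ⟨fun h => hrl₁ (h ▸ hel), fun h => ?_⟩
    exact ((hE'.2 e (hE'.1 heE')).1 heE') (h ▸ hrE')
  have c2 : ∀ e ∈ l₁, drev r ≠ e ∧ drev r ≠ drev e := by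
    intro e hel
    have heE' : e ∈ E' := hl₁E' e hel
    refine ⟨fun h => ((hE'.2 r hrE).1 hrE') (h ▸ heE'), fun h => ?_⟩
    have hre : r = e := by rw [← drev_drev r, h, drev_drev]
    exact hrl₁ (hre ▸ hel)
  show r ∈ l₁.foldr (fun e D => psiE E d A E' e D)
      (psiE E d A E' r (l₂.foldr (fun e D => psiE E d A E' e D) D)) ↔
    drev r ∈ l₁.foldr (fun e D => psiE E d A E' e D)
      (psiE E d A E' r (l₂.foldr (fun e D => psiE E d A E' e D) D))
  rw [hmem r c1, hmem (drev r) c2]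
  exact hpair

end Helpers3
theorem psi_maps_orientations_to_subgraphs
    {V : Type*} [Fintype V] [DecidableEq V]
    (E : Finset (V × V)) (hE_symm : ∀ e, e ∈ E ↔ drev e ∈ E)
    (hE_ne : ∀ e ∈ E, e.1 ≠ e.2)
    (d : V → ℤ) (hd : ∑ u : V, d u = 0)
    (w : V × V → ℝ) (hw : ∀ e ∈ E, 0 < w e)
    (A : Finset (V × V) → Finset (V × V)) (hA : GoodA E d w A)
    (E' : Finset (V × V)) (hE' : IsOrientation E E')
    (l : List (V × V)) (hl_nd : l.Nodup) (hl : l.toFinset = E')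
    (L : Finset (V × V)) (hL : IsOrientation E L) (hLf : AdmitsFlow E L d) :
    IsSubgraph E (l.foldr (fun e D => psiE E d A E' e D) L) ∧
    AdmitsFlow E (l.foldr (fun e D => psiE E d A E' e D) L) d ∧
    A (l.foldr (fun e D => psiE E d A E' e D) L) = A L := by
  have hlE' : ∀ e ∈ l, e ∈ E' := fun e h => by rw [← hl]; exact List.mem_toFinset.2 h
  have hlE : ∀ e ∈ l, e ∈ E := fun e h => hE'.1 (hlE' e h)
  obtain ⟨⟨h1, h2, h3⟩, _⟩ :=
    foldr_psi E hE_symm hE_ne d w hw A hA E' l hlE L hL.1 hLf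
  refine ⟨⟨h1, ?_⟩, h2, h3⟩
  intro x hx
  by_cases hxE' : x ∈ E'
  · exact mem_foldr_pair E hE_symm hE_ne d w hw A hA E' hE' l hl_nd hlE' x
      (List.mem_toFinset.1 (by rw [hl]; exact hxE')) L hL.1 hLf
  · have hrx : drev x ∈ E' := by
      by_contra h
      exact hxE' ((hE'.2 x hx).2 h)
    have := mem_foldr_pair E hE_symm hE_ne d w hw A hA E' hE' l hl_nd hlE' (drev x)
      (List.mem_toFinset.1 (by rw [hl]; exact hrx)) L hL.1 hLf
    rw [drev_drev] at this
    exact this.symm
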